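/- Consider the 5-simplex on vertices {1,...,6} and the Pachner move 3–3 configurations: the left side consists of the three pentachora L = {12345, 12346, 12356} with interior tetrahedra {1234, 1235, 1236}, the right side of the three pentachora R = {12456, 13456, 23456} with interior tetrahedra {1456, 2456, 3456}, and the common boundary tetrahedra are B = {2345, 1345, 1245, 2346, 1346, 1246, 2356, 1356, 1256}. A permitted ℤ-coloring of a side is an assignment (x_t, y_t) ∈ ℤ × ℤ to every tetrahedron t that is a face of its pentachora, such that 𝐲_u = ℛ𝐱_u for each pentachoron u of that side. Then the map restricting a permitted coloring of the left side to B is injective, the map restricting a permitted coloring of the right side to B is injective, and the two maps have the same image; hence permitted colorings of the two sides agreeing on B are in bijective correspondence. -/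
import Mathlib


/- The Pachner move 3–3 inside the 5-simplex with vertex set `Fin 6`
   (vertices 1,…,6 of the paper are 0,…,5 here). -/

/-- The matrix ℛ from the paper. -/
def Rmat : Matrix (Fin 5) (Fin 5) ℤ :=
  !![0, -2, 1, 1, -2;
     0, -1, 0, 1, -1;
     -1, 2, -2, 0, 1;
     -1, 3, -2, -1, 2;
     0, 1, -1, 0, 0]

/-- The five tetrahedral faces `jklm, iklm, ijlm, ijkm, ijkl` of the
pentachoron `ijklm = abcde`. -/
def pentFaces (a b c d e : Fin 6) : Fin 5 → Finset (Fin 6) :=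
  ![{b, c, d, e}, {a, c, d, e}, {a, b, d, e}, {a, b, c, e}, {a, b, c, d}]

/-- A ℤ-coloring `t ↦ (x_t, y_t)` is permitted on the pentachoron `abcde`
iff `𝐲_u = ℛ 𝐱_u`, where ℛ acts with integer coefficients. -/
def IsPermitted (f : Finset (Fin 6) → ℤ × ℤ) (a b c d e : Fin 6) : Prop :=
  ∀ i : Fin 5,
    (f (pentFaces a b c d e i)).2 =
      ∑ j : Fin 5, Rmat i j * (f (pentFaces a b c d e j)).1

/-- Permitted coloring of the left side of the move 3–3: the pentachora
`12345, 12346, 12356`. -/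
def PermittedLeft (f : Finset (Fin 6) → ℤ × ℤ) : Prop :=
  IsPermitted f 0 1 2 3 4 ∧ IsPermitted f 0 1 2 3 5 ∧ IsPermitted f 0 1 2 4 5

/-- Permitted coloring of the right side of the move 3–3: the pentachora
`12456, 13456, 23456`. -/
def PermittedRight (f : Finset (Fin 6) → ℤ × ℤ) : Prop :=
  IsPermitted f 0 1 3 4 5 ∧ IsPermitted f 0 2 3 4 5 ∧ IsPermitted f 1 2 3 4 5

/-- The common boundary tetrahedra
`B = {2345, 1345, 1245, 2346, 1346, 1246, 2356, 1356, 1256}`. -/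
def Bdry : Finset (Finset (Fin 6)) :=
  {{1, 2, 3, 4}, {0, 2, 3, 4}, {0, 1, 3, 4},
   {1, 2, 3, 5}, {0, 2, 3, 5}, {0, 1, 3, 5},
   {1, 2, 4, 5}, {0, 2, 4, 5}, {0, 1, 4, 5}}

/-- The tetrahedra that are faces of the left-side pentachora: the boundary
ones together with the interior tetrahedra `1234, 1235, 1236`. -/
def FacesLeft : Finset (Finset (Fin 6)) :=
  Bdry ∪ {{0, 1, 2, 3}, {0, 1, 2, 4}, {0, 1, 2, 5}}

/-- The tetrahedra that are faces of the right-side pentachora: the boundary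
ones together with the interior tetrahedra `1456, 2456, 3456`. -/
def FacesRight : Finset (Finset (Fin 6)) :=
  Bdry ∪ {{0, 3, 4, 5}, {1, 3, 4, 5}, {2, 3, 4, 5}}

theorem isPermitted_iff (f : Finset (Fin 6) → ℤ × ℤ) (a b c d e : Fin 6) :
    IsPermitted f a b c d e ↔
      ((f {b, c, d, e}).2 = -2 * (f {a, c, d, e}).1 + (f {a, b, d, e}).1 + (f {a, b, c, e}).1 - 2 * (f {a, b, c, d}).1 ∧
      (f {a, c, d, e}).2 = -(f {a, c, d, e}).1 + (f {a, b, c, e}).1 - (f {a, b, c, d}).1 ∧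
      (f {a, b, d, e}).2 = -(f {b, c, d, e}).1 + 2 * (f {a, c, d, e}).1 - 2 * (f {a, b, d, e}).1 + (f {a, b, c, d}).1 ∧
      (f {a, b, c, e}).2 = -(f {b, c, d, e}).1 + 3 * (f {a, c, d, e}).1 - 2 * (f {a, b, d, e}).1 - (f {a, b, c, e}).1 + 2 * (f {a, b, c, d}).1 ∧
      (f {a, b, c, d}).2 = (f {a, c, d, e}).1 - (f {a, b, d, e}).1) := by
  constructor
  · intro h
    have h0 := h 0
    have h1 := h 1
    have h2 := h 2
    have h3 := h 3
    have h4 := h 4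
    simp [pentFaces, Rmat, Fin.sum_univ_five] at h0 h1 h2 h3 h4
    exact ⟨by linarith, by linarith, by linarith, by linarith, by linarith⟩
  · rintro ⟨h0, h1, h2, h3, h4⟩ i
    fin_cases i <;> simp [pentFaces, Rmat, Fin.sum_univ_five] <;> linarith

set_option maxHeartbeats 3000000 in
/-- For the Pachner move 3–3: restriction to the boundary `B` is injective on
permitted colorings of the left side, injective on permitted colorings of the
right side, and the two restriction maps have the same image; hence permitted
colorings of the two sides agreeing on `B` are in bijective correspondence. -/
theorem pachner_three_three :
    (∀ f g : Finset (Fin 6) → ℤ × ℤ, PermittedLeft f → PermittedLeft g →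
      (∀ t ∈ Bdry, f t = g t) → ∀ t ∈ FacesLeft, f t = g t) ∧
    (∀ f g : Finset (Fin 6) → ℤ × ℤ, PermittedRight f → PermittedRight g →
      (∀ t ∈ Bdry, f t = g t) → ∀ t ∈ FacesRight, f t = g t) ∧
    (∀ b : Finset (Fin 6) → ℤ × ℤ,
      (∃ f, PermittedLeft f ∧ ∀ t ∈ Bdry, f t = b t) ↔
      (∃ f, PermittedRight f ∧ ∀ t ∈ Bdry, f t = b t)) := by
  refine ⟨?_, ?_, ?_⟩
  · intro f g hf hg hb t ht
    obtain ⟨hfa, hfb, hfc⟩ := hf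
    obtain ⟨hga, hgb, hgc⟩ := hg
    obtain ⟨hfa0, hfa1, hfa2, hfa3, hfa4⟩ := (isPermitted_iff _ _ _ _ _ _).mp hfa
    obtain ⟨hfb0, hfb1, hfb2, hfb3, hfb4⟩ := (isPermitted_iff _ _ _ _ _ _).mp hfb
    obtain ⟨hfc0, hfc1, hfc2, hfc3, hfc4⟩ := (isPermitted_iff _ _ _ _ _ _).mp hfc
    obtain ⟨hga0, hga1, hga2, hga3, hga4⟩ := (isPermitted_iff _ _ _ _ _ _).mp hga
    obtain ⟨hgb0, hgb1, hgb2, hgb3, hgb4⟩ := (isPermitted_iff _ _ _ _ _ _).mp hgb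
    obtain ⟨hgc0, hgc1, hgc2, hgc3, hgc4⟩ := (isPermitted_iff _ _ _ _ _ _).mp hgc
    have hb0 := Prod.ext_iff.mp (hb {1, 2, 3, 4} (by decide))
    have hb1 := Prod.ext_iff.mp (hb {0, 2, 3, 4} (by decide))
    have hb2 := Prod.ext_iff.mp (hb {0, 1, 3, 4} (by decide))
    have hb3 := Prod.ext_iff.mp (hb {1, 2, 3, 5} (by decide))
    have hb4 := Prod.ext_iff.mp (hb {0, 2, 3, 5} (by decide))
    have hb5 := Prod.ext_iff.mp (hb {0, 1, 3, 5} (by decide))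
    have hb6 := Prod.ext_iff.mp (hb {1, 2, 4, 5} (by decide))
    have hb7 := Prod.ext_iff.mp (hb {0, 2, 4, 5} (by decide))
    have hb8 := Prod.ext_iff.mp (hb {0, 1, 4, 5} (by decide))
    simp only [FacesLeft, Bdry, Finset.mem_union, Finset.mem_insert, Finset.mem_singleton] at ht
    rcases ht with (rfl | rfl | rfl | rfl | rfl | rfl | rfl | rfl | rfl) | (rfl | rfl | rfl)
    all_goals first
    | exact hb _ (by decide)
    | (rw [Prod.ext_iff]; constructor <;> linarith)
  · intro f g hf hg hb t ht
    obtain ⟨hfa, hfb, hfc⟩ := hf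
    obtain ⟨hga, hgb, hgc⟩ := hg
    obtain ⟨hfa0, hfa1, hfa2, hfa3, hfa4⟩ := (isPermitted_iff _ _ _ _ _ _).mp hfa
    obtain ⟨hfb0, hfb1, hfb2, hfb3, hfb4⟩ := (isPermitted_iff _ _ _ _ _ _).mp hfb
    obtain ⟨hfc0, hfc1, hfc2, hfc3, hfc4⟩ := (isPermitted_iff _ _ _ _ _ _).mp hfc
    obtain ⟨hga0, hga1, hga2, hga3, hga4⟩ := (isPermitted_iff _ _ _ _ _ _).mp hga
    obtain ⟨hgb0, hgb1, hgb2, hgb3, hgb4⟩ := (isPermitted_iff _ _ _ _ _ _).mp hgb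
    obtain ⟨hgc0, hgc1, hgc2, hgc3, hgc4⟩ := (isPermitted_iff _ _ _ _ _ _).mp hgc
    have hb0 := Prod.ext_iff.mp (hb {1, 2, 3, 4} (by decide))
    have hb1 := Prod.ext_iff.mp (hb {0, 2, 3, 4} (by decide))
    have hb2 := Prod.ext_iff.mp (hb {0, 1, 3, 4} (by decide))
    have hb3 := Prod.ext_iff.mp (hb {1, 2, 3, 5} (by decide))
    have hb4 := Prod.ext_iff.mp (hb {0, 2, 3, 5} (by decide))
    have hb5 := Prod.ext_iff.mp (hb {0, 1, 3, 5} (by decide))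
    have hb6 := Prod.ext_iff.mp (hb {1, 2, 4, 5} (by decide))
    have hb7 := Prod.ext_iff.mp (hb {0, 2, 4, 5} (by decide))
    have hb8 := Prod.ext_iff.mp (hb {0, 1, 4, 5} (by decide))
    simp only [FacesRight, Bdry, Finset.mem_union, Finset.mem_insert, Finset.mem_singleton] at ht
    rcases ht with (rfl | rfl | rfl | rfl | rfl | rfl | rfl | rfl | rfl) | (rfl | rfl | rfl)
    all_goals first
    | exact hb _ (by decide)
    | (rw [Prod.ext_iff]; constructor <;> linarith)
  · intro b
    constructor
    · rintro ⟨f, ⟨hfa, hfb, hfc⟩, hfB⟩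
      obtain ⟨hfa0, hfa1, hfa2, hfa3, hfa4⟩ := (isPermitted_iff _ _ _ _ _ _).mp hfa
      obtain ⟨hfb0, hfb1, hfb2, hfb3, hfb4⟩ := (isPermitted_iff _ _ _ _ _ _).mp hfb
      obtain ⟨hfc0, hfc1, hfc2, hfc3, hfc4⟩ := (isPermitted_iff _ _ _ _ _ _).mp hfc
      set g : Finset (Fin 6) → ℤ × ℤ := fun t => if t = ({0, 3, 4, 5} : Finset (Fin 6)) then
          ((f {0, 1, 4, 5}).1 + (f {0, 1, 3, 4}).2, -(f {0, 1, 3, 5}).2 + (f {0, 1, 4, 5}).2)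
        else if t = ({1, 3, 4, 5} : Finset (Fin 6)) then
          ((f {0, 1, 3, 4}).2 + (f {1, 2, 3, 5}).2 - (f {0, 1, 3, 5}).2 - (f {1, 2, 4, 5}).2, -(f {1, 2, 3, 5}).2 + (f {1, 2, 4, 5}).2)
        else if t = ({2, 3, 4, 5} : Finset (Fin 6)) then
          ((f {0, 2, 3, 5}).1 - (f {0, 1, 4, 5}).1 + 2 * (f {0, 2, 3, 4}).2 - (f {0, 1, 3, 4}).2 + (f {0, 1, 3, 5}).2 - (f {0, 2, 4, 5}).2 - (f {0, 1, 4, 5}).2, -(f {0, 2, 3, 5}).1 + (f {0, 1, 4, 5}).1 - (f {0, 2, 3, 4}).2 + (f {0, 1, 3, 4}).2 - 2 * (f {0, 1, 3, 5}).2 + 2 * (f {0, 1, 4, 5}).2)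
        else f t with hg
      have gA : g {0, 3, 4, 5} = ((f {0, 1, 4, 5}).1 + (f {0, 1, 3, 4}).2, -(f {0, 1, 3, 5}).2 + (f {0, 1, 4, 5}).2) := by simp [hg]
      have gB : g {1, 3, 4, 5} = ((f {0, 1, 3, 4}).2 + (f {1, 2, 3, 5}).2 - (f {0, 1, 3, 5}).2 - (f {1, 2, 4, 5}).2, -(f {1, 2, 3, 5}).2 + (f {1, 2, 4, 5}).2) := by simp +decide [hg]
      have gC : g {2, 3, 4, 5} = ((f {0, 2, 3, 5}).1 - (f {0, 1, 4, 5}).1 + 2 * (f {0, 2, 3, 4}).2 - (f {0, 1, 3, 4}).2 + (f {0, 1, 3, 5}).2 - (f {0, 2, 4, 5}).2 - (f {0, 1, 4, 5}).2, -(f {0, 2, 3, 5}).1 + (f {0, 1, 4, 5}).1 - (f {0, 2, 3, 4}).2 + (f {0, 1, 3, 4}).2 - 2 * (f {0, 1, 3, 5}).2 + 2 * (f {0, 1, 4, 5}).2) := by simp +decide [hg]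
      have gS0 : g {1, 2, 3, 4} = f {1, 2, 3, 4} := by simp +decide [hg]
      have gS1 : g {0, 2, 3, 4} = f {0, 2, 3, 4} := by simp +decide [hg]
      have gS2 : g {0, 1, 3, 4} = f {0, 1, 3, 4} := by simp +decide [hg]
      have gS3 : g {1, 2, 3, 5} = f {1, 2, 3, 5} := by simp +decide [hg]
      have gS4 : g {0, 2, 3, 5} = f {0, 2, 3, 5} := by simp +decide [hg]
      have gS5 : g {0, 1, 3, 5} = f {0, 1, 3, 5} := by simp +decide [hg]
      have gS6 : g {1, 2, 4, 5} = f {1, 2, 4, 5} := by simp +decide [hg]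
      have gS7 : g {0, 2, 4, 5} = f {0, 2, 4, 5} := by simp +decide [hg]
      have gS8 : g {0, 1, 4, 5} = f {0, 1, 4, 5} := by simp +decide [hg]
      refine ⟨g, ⟨?_, ?_, ?_⟩, ?_⟩
      · rw [isPermitted_iff]
        simp only [gA, gB, gC, gS0, gS1, gS2, gS3, gS4, gS5, gS6, gS7, gS8, Prod.ext_iff]
        refine ⟨?_, ?_, ?_, ?_, ?_⟩ <;> linarith
      · rw [isPermitted_iff]
        simp only [gA, gB, gC, gS0, gS1, gS2, gS3, gS4, gS5, gS6, gS7, gS8, Prod.ext_iff]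
        refine ⟨?_, ?_, ?_, ?_, ?_⟩ <;> linarith
      · rw [isPermitted_iff]
        simp only [gA, gB, gC, gS0, gS1, gS2, gS3, gS4, gS5, gS6, gS7, gS8, Prod.ext_iff]
        refine ⟨?_, ?_, ?_, ?_, ?_⟩ <;> linarith
      · intro t ht
        simp only [Bdry, Finset.mem_insert, Finset.mem_singleton] at ht
        rcases ht with rfl | rfl | rfl | rfl | rfl | rfl | rfl | rfl | rfl <;>
          simp only [gS0, gS1, gS2, gS3, gS4, gS5, gS6, gS7, gS8] <;> exact hfB _ (by decide)
    · rintro ⟨f, ⟨hfa, hfb, hfc⟩, hfB⟩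
      obtain ⟨hfa0, hfa1, hfa2, hfa3, hfa4⟩ := (isPermitted_iff _ _ _ _ _ _).mp hfa
      obtain ⟨hfb0, hfb1, hfb2, hfb3, hfb4⟩ := (isPermitted_iff _ _ _ _ _ _).mp hfb
      obtain ⟨hfc0, hfc1, hfc2, hfc3, hfc4⟩ := (isPermitted_iff _ _ _ _ _ _).mp hfc
      set g : Finset (Fin 6) → ℤ × ℤ := fun t => if t = ({0, 1, 2, 3} : Finset (Fin 6)) then
          (-(f {0, 2, 3, 5}).1 + (f {0, 1, 4, 5}).1 - (f {0, 1, 3, 5}).2 - (f {1, 2, 4, 5}).2 + (f {0, 2, 4, 5}).2 + (f {0, 1, 4, 5}).2, (f {0, 2, 3, 5}).1 - (f {0, 1, 4, 5}).1 - (f {1, 2, 3, 5}).2 + 2 * (f {0, 1, 3, 5}).2 + (f {1, 2, 4, 5}).2 - 2 * (f {0, 1, 4, 5}).2)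
        else if t = ({0, 1, 2, 4} : Finset (Fin 6)) then
          ((f {0, 2, 3, 4}).2 - (f {0, 1, 3, 4}).2 - (f {1, 2, 4, 5}).2 + (f {0, 2, 4, 5}).2, -(f {0, 2, 3, 4}).2 + (f {0, 1, 3, 4}).2)
        else if t = ({0, 1, 2, 5} : Finset (Fin 6)) then
          ((f {0, 1, 4, 5}).1 - (f {1, 2, 4, 5}).2 + 2 * (f {0, 2, 4, 5}).2, -(f {0, 2, 4, 5}).2 + (f {0, 1, 4, 5}).2)
        else f t with hg
      have gA : g {0, 1, 2, 3} = (-(f {0, 2, 3, 5}).1 + (f {0, 1, 4, 5}).1 - (f {0, 1, 3, 5}).2 - (f {1, 2, 4, 5}).2 + (f {0, 2, 4, 5}).2 + (f {0, 1, 4, 5}).2, (f {0, 2, 3, 5}).1 - (f {0, 1, 4, 5}).1 - (f {1, 2, 3, 5}).2 + 2 * (f {0, 1, 3, 5}).2 + (f {1, 2, 4, 5}).2 - 2 * (f {0, 1, 4, 5}).2) := by simp [hg]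
      have gB : g {0, 1, 2, 4} = ((f {0, 2, 3, 4}).2 - (f {0, 1, 3, 4}).2 - (f {1, 2, 4, 5}).2 + (f {0, 2, 4, 5}).2, -(f {0, 2, 3, 4}).2 + (f {0, 1, 3, 4}).2) := by simp +decide [hg]
      have gC : g {0, 1, 2, 5} = ((f {0, 1, 4, 5}).1 - (f {1, 2, 4, 5}).2 + 2 * (f {0, 2, 4, 5}).2, -(f {0, 2, 4, 5}).2 + (f {0, 1, 4, 5}).2) := by simp +decide [hg]
      have gS0 : g {1, 2, 3, 4} = f {1, 2, 3, 4} := by simp +decide [hg]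
      have gS1 : g {0, 2, 3, 4} = f {0, 2, 3, 4} := by simp +decide [hg]
      have gS2 : g {0, 1, 3, 4} = f {0, 1, 3, 4} := by simp +decide [hg]
      have gS3 : g {1, 2, 3, 5} = f {1, 2, 3, 5} := by simp +decide [hg]
      have gS4 : g {0, 2, 3, 5} = f {0, 2, 3, 5} := by simp +decide [hg]
      have gS5 : g {0, 1, 3, 5} = f {0, 1, 3, 5} := by simp +decide [hg]
      have gS6 : g {1, 2, 4, 5} = f {1, 2, 4, 5} := by simp +decide [hg]
      have gS7 : g {0, 2, 4, 5} = f {0, 2, 4, 5} := by simp +decide [hg]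
      have gS8 : g {0, 1, 4, 5} = f {0, 1, 4, 5} := by simp +decide [hg]
      refine ⟨g, ⟨?_, ?_, ?_⟩, ?_⟩
      · rw [isPermitted_iff]
        simp only [gA, gB, gC, gS0, gS1, gS2, gS3, gS4, gS5, gS6, gS7, gS8, Prod.ext_iff]
        refine ⟨?_, ?_, ?_, ?_, ?_⟩ <;> linarith
      · rw [isPermitted_iff]
        simp only [gA, gB, gC, gS0, gS1, gS2, gS3, gS4, gS5, gS6, gS7, gS8, Prod.ext_iff]
        refine ⟨?_, ?_, ?_, ?_, ?_⟩ <;> linarith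
      · rw [isPermitted_iff]
        simp only [gA, gB, gC, gS0, gS1, gS2, gS3, gS4, gS5, gS6, gS7, gS8, Prod.ext_iff]
        refine ⟨?_, ?_, ?_, ?_, ?_⟩ <;> linarith
      · intro t ht
        simp only [Bdry, Finset.mem_insert, Finset.mem_singleton] at ht
        rcases ht with rfl | rfl | rfl | rfl | rfl | rfl | rfl | rfl | rfl <;>
          simp only [gS0, gS1, gS2, gS3, gS4, gS5, gS6, gS7, gS8] <;> exact hfB _ (by decide)
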